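/- Let A₁, …, Aₙ be 2×2 Hermitian complex matrices with zero trace such that A(p) := p₁A₁ + ⋯ + pₙAₙ is invertible for every p ∈ ℝⁿ \ {0}. Then n ≤ 3. -/
import Mathlib


open Matrix

/-- If `A₁, …, Aₙ` are trace-free Hermitian `2×2` matrices such that
`A(p) = p₁A₁ + ⋯ + pₙAₙ` is invertible for all `p ≠ 0`, then `n ≤ 3`. -/
theorem dimension_le_three_of_elliptic_trace_free
    {n : ℕ} (A : Fin n → Matrix (Fin 2) (Fin 2) ℂ)
    (hHerm : ∀ α, (A α).IsHermitian) (hTr : ∀ α, (A α).trace = 0)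
    (hell : ∀ p : Fin n → ℝ, p ≠ 0 → IsUnit (∑ α, (p α : ℂ) • A α)) :
    n ≤ 3 := by
  by_contra hn
  push_neg at hn
  -- encode each `A α` by three real parameters
  set M : Matrix (Fin 3) (Fin n) ℝ :=
    Matrix.of (fun i α => ![((A α) 0 0).re, ((A α) 0 1).re, ((A α) 0 1).im] i) with hM
  have hinj : ¬ Function.Injective M.mulVecLin := by
    intro h
    have := LinearMap.finrank_le_finrank_of_injective h
    simp [Module.finrank_pi] at this
    omega
  rw [Function.not_injective_iff] at hinj
  obtain ⟨x, y, hxy, hne⟩ := hinj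
  set p : Fin n → ℝ := x - y with hp
  have hp0 : p ≠ 0 := sub_ne_zero.mpr hne
  have hfp : M.mulVec p = 0 := by
    have : M.mulVecLin p = M.mulVecLin x - M.mulVecLin y := by
      rw [hp]; exact map_sub _ _ _
    rw [Matrix.mulVecLin_apply] at this
    rw [this, hxy, sub_self]
  -- basic facts from Hermitian and trace-free
  have hd : ∀ α, ((A α) 0 0).im = 0 := by
    intro α
    have := (hHerm α).coe_re_diag
    have h2 := congrFun this 0
    simp [Matrix.diag] at h2
    exact Complex.ext_iff.mp h2.symm |>.2.symm |>.symm
  have h11 : ∀ α, (A α) 1 1 = -((A α) 0 0) := by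
    intro α
    have := hTr α
    rw [Matrix.trace_fin_two] at this
    linear_combination this
  have h10 : ∀ α, (A α) 1 0 = starRingEnd ℂ ((A α) 0 1) := by
    intro α
    have := (hHerm α).apply 1 0
    simpa using this.symm
  -- the three real equations
  have e0 : ∑ α, p α * ((A α) 0 0).re = 0 := by
    have := congrFun hfp 0
    simpa [Matrix.mulVec, dotProduct, hM, mul_comm] using this
  have e1 : ∑ α, p α * ((A α) 0 1).re = 0 := by
    have := congrFun hfp 1
    simpa [Matrix.mulVec, dotProduct, hM, mul_comm] using this
  have e2 : ∑ α, p α * ((A α) 0 1).im = 0 := by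
    have := congrFun hfp 2
    simpa [Matrix.mulVec, dotProduct, hM, mul_comm] using this
  have key00 : ∑ α, (p α : ℂ) * (A α) 0 0 = 0 := by
    apply Complex.ext <;>
      simp [Complex.re_sum, Complex.im_sum, hd, e0]
  have key01 : ∑ α, (p α : ℂ) * (A α) 0 1 = 0 := by
    apply Complex.ext <;>
      simp [Complex.re_sum, Complex.im_sum, e1, e2]
  have hzero : (∑ α, (p α : ℂ) • A α) = 0 := by
    ext i j
    fin_cases i <;> fin_cases j <;>
      simp only [Matrix.sum_apply, Matrix.smul_apply, smul_eq_mul, Matrix.zero_apply]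
    · exact key00
    · exact key01
    · calc ∑ α, (p α : ℂ) * (A α) 1 0
          = starRingEnd ℂ (∑ α, (p α : ℂ) * (A α) 0 1) := by
            rw [map_sum]; congr 1; ext α; rw [h10 α]; simp
        _ = 0 := by rw [key01]; simp
    · calc ∑ α, (p α : ℂ) * (A α) 1 1
          = -(∑ α, (p α : ℂ) * (A α) 0 0) := by
            rw [← Finset.sum_neg_distrib]; congr 1; ext α; rw [h11 α]; ring
        _ = 0 := by rw [key00]; simp
  have := hell p hp0
  rw [hzero] at this
  exact not_isUnit_zero this
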